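/- arXiv:2103.09719 — 6 statements merged into one kernel-verified Lean document; each statement's English description precedes it below -/
import Mathlib

section
/- If H₁ and H₂ are subgroups of a group G, each commensurable with some normal subgroup of G, then H₁ ∩ H₂ is commensurable with a normal subgroup of G. -/
/-- A subgroup is subnormal if it is joined to the whole group by a finite
chain of successive normal subgroups. -/
def IsSubnormal {G : Type*} [Group G] (H : Subgroup G) : Prop :=
  ∃ n : ℕ, ∃ c : ℕ → Subgroup G, c 0 = H ∧ c n = ⊤ ∧
    ∀ i < n, c i ≤ c (i + 1) ∧ ((c i).subgroupOf (c (i + 1))).Normal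

/-- A group has finite rank if there is `r` such that every finitely generated
subgroup can be generated by at most `r` elements. -/
def HasFiniteRank (G : Type*) [Group G] : Prop :=
  ∃ r : ℕ, ∀ H : Subgroup G, H.FG →
    ∃ S : Finset G, S.card ≤ r ∧ Subgroup.closure (S : Set G) = H

/-- A subgroup is a cn-subgroup if it is commensurable with some normal subgroup. -/
def IsCN {G : Type*} [Group G] (H : Subgroup G) : Prop :=
  ∃ N : Subgroup G, N.Normal ∧ Subgroup.Commensurable H N

/-- A subgroup is a cf-subgroup if its normal core has finite index in it. -/
def IsCF {G : Type*} [Group G] (H : Subgroup G) : Prop :=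
  H.normalCore.relIndex H ≠ 0


private lemma commensurable_inf_right {G : Type*} [Group G] {A B : Subgroup G}
    (h : Subgroup.Commensurable A B) (C : Subgroup G) : Subgroup.Commensurable (A ⊓ C) (B ⊓ C) := by
  have key : ∀ X Y : Subgroup G, X.relIndex Y ≠ 0 → (X ⊓ C).relIndex (Y ⊓ C) ≠ 0 := by
    intro X Y hXY
    apply Subgroup.relIndex_inf_ne_zero
    · exact fun h0 => hXY (Subgroup.relIndex_eq_zero_of_le_right inf_le_left h0)
    · rw [Subgroup.relIndex_eq_one.mpr inf_le_right]; exact one_ne_zero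
  exact ⟨key A B h.1, key B A h.2⟩

theorem inf_isCN {G : Type*} [Group G] (H₁ H₂ : Subgroup G)
    (h1 : IsCN H₁) (h2 : IsCN H₂) : IsCN (H₁ ⊓ H₂) := by
  obtain ⟨N₁, hN₁, hc₁⟩ := h1
  obtain ⟨N₂, hN₂, hc₂⟩ := h2
  refine ⟨N₁ ⊓ N₂, (@Subgroup.normal_inf_normal _ _ N₁ N₂ hN₁ hN₂), ?_⟩
  have s1 : Subgroup.Commensurable (H₁ ⊓ H₂) (N₁ ⊓ H₂) := commensurable_inf_right hc₁ H₂
  have s2 : Subgroup.Commensurable (H₂ ⊓ N₁) (N₂ ⊓ N₁) := commensurable_inf_right hc₂ N₁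
  rw [inf_comm N₁ H₂] at s1
  rw [inf_comm N₂ N₁] at s2
  exact s1.trans s2
end

section
/- If H₁ and H₂ are subgroups of a group G, each having finite index over its normal core in G (cf-subgroups), and the set H₁H₂ is a subgroup, then H₁H₂ is a cf-subgroup of G. -/
theorem mul_isCF {G : Type*} [Group G] (H₁ H₂ : Subgroup G)
    (h1 : IsCF H₁) (h2 : IsCF H₂) (K : Subgroup G)
    (hK : (K : Set G) = {x : G | ∃ a ∈ H₁, ∃ b ∈ H₂, x = a * b}) : IsCF K := by
  classical
  set N₁ := H₁.normalCore with hN₁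
  set N₂ := H₂.normalCore with hN₂
  set M := N₁ ⊔ N₂ with hM
  have hMnormal : M.Normal := Subgroup.sup_normal N₁ N₂
  have hmemK : ∀ x : G, x ∈ K ↔ ∃ a ∈ H₁, ∃ b ∈ H₂, x = a * b := by
    intro x
    constructor
    · intro hx
      have : x ∈ (K : Set G) := hx
      rwa [hK] at this
    · intro hx
      have : x ∈ (K : Set G) := by rw [hK]; exact hx
      exact this
  have hH₁K : H₁ ≤ K := by
    intro a ha
    exact (hmemK a).2 ⟨a, ha, 1, one_mem _, by simp⟩
  have hH₂K : H₂ ≤ K := by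
    intro b hb
    exact (hmemK b).2 ⟨1, one_mem _, b, hb, by simp⟩
  have hMK : M ≤ K := sup_le ((H₁.normalCore_le).trans hH₁K) ((H₂.normalCore_le).trans hH₂K)
  have hMcore : M ≤ K.normalCore := Subgroup.normal_le_normalCore.2 hMK
  -- quotients
  have hfin1 : Finite (H₁ ⧸ N₁.subgroupOf H₁) := Nat.finite_of_card_ne_zero h1
  have hfin2 : Finite (H₂ ⧸ N₂.subgroupOf H₂) := Nat.finite_of_card_ne_zero h2
  -- define the map from H₁ × H₂ to K ⧸ M.subgroupOf K
  have hmulK : ∀ (a : H₁) (b : H₂), (a : G) * b ∈ K := fun a b =>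
    (hmemK _).2 ⟨a, a.2, b, b.2, rfl⟩
  let F : H₁ → H₂ → K ⧸ M.subgroupOf K := fun a b =>
    QuotientGroup.mk ⟨(a : G) * b, hmulK a b⟩
  have hresp : ∀ (a₁ : H₁) (b₁ : H₂) (a₂ : H₁) (b₂ : H₂),
      (QuotientGroup.leftRel (N₁.subgroupOf H₁)) a₁ a₂ →
      (QuotientGroup.leftRel (N₂.subgroupOf H₂)) b₁ b₂ → F a₁ b₁ = F a₂ b₂ := by
    intro a₁ b₁ a₂ b₂ ha hb
    rw [QuotientGroup.leftRel_apply] at ha hb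
    have ha' : (a₁ : G)⁻¹ * a₂ ∈ N₁ := ha
    have hb' : (b₁ : G)⁻¹ * b₂ ∈ N₂ := hb
    apply Quotient.sound
    refine QuotientGroup.leftRel_apply.mpr ?_
    show (((a₁ : G) * b₁)⁻¹ * ((a₂ : G) * b₂) : G) ∈ M
    have key : ((a₁ : G) * b₁)⁻¹ * ((a₂ : G) * b₂)
        = ((b₁ : G)⁻¹ * ((a₁ : G)⁻¹ * a₂) * b₁) * ((b₁ : G)⁻¹ * b₂) := by
      group
    rw [key]
    have hc : (b₁ : G)⁻¹ * ((a₁ : G)⁻¹ * a₂) * b₁ ∈ N₁ := by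
      have := H₁.normalCore_normal.conj_mem _ ha' ((b₁ : G)⁻¹)
      simpa using this
    exact mul_mem (le_sup_left (α := Subgroup G) hc) (le_sup_right (α := Subgroup G) hb')
  let s : (H₁ ⧸ N₁.subgroupOf H₁) → (H₂ ⧸ N₂.subgroupOf H₂) → K ⧸ M.subgroupOf K :=
    Quotient.lift₂ F hresp
  have hsurj : Function.Surjective (fun p : (H₁ ⧸ N₁.subgroupOf H₁) × (H₂ ⧸ N₂.subgroupOf H₂) =>
      s p.1 p.2) := by
    intro q
    obtain ⟨⟨k, hk⟩, rfl⟩ := QuotientGroup.mk_surjective q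
    obtain ⟨a, ha, b, hb, rfl⟩ := (hmemK k).1 hk
    exact ⟨(QuotientGroup.mk ⟨a, ha⟩, QuotientGroup.mk ⟨b, hb⟩), rfl⟩
  have hfinQ : Finite (K ⧸ M.subgroupOf K) := Finite.of_surjective _ hsurj
  have hMrel : M.relIndex K ≠ 0 := by
    have : Nat.card (K ⧸ M.subgroupOf K) ≠ 0 := Nat.card_ne_zero.2 ⟨⟨1⟩, hfinQ⟩
    exact this
  exact fun h0 => hMrel (Subgroup.relIndex_eq_zero_of_le_left hMcore h0)
end

section
/- If a subgroup H of a group G has finite index over its core H_G, then H is commensurable with the normal subgroup H_G; conversely, if H has finite rank and is commensurable with a normal subgroup of G, then |H : H_G| is finite. -/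
open Subgroup Pointwise

section Aux

/-- A group of finite rank has finitely many homomorphisms to any finite group. -/
lemma aux_finite_homs {X F : Type*} [Group X] [Group F] [Finite F]
    (hX : HasFiniteRank X) : Finite (X →* F) := by
  classical
  obtain ⟨r, hr⟩ := hX
  haveI : Fintype F := Fintype.ofFinite F
  by_contra hinf
  rw [not_finite_iff_infinite] at hinf
  obtain ⟨T, -, hTcard⟩ :=
    (Set.infinite_univ (α := X →* F)).exists_subset_card_eq (Fintype.card F ^ r + 1)
  have sep : ∀ φ ψ : X →* F, ∃ x, (φ ≠ ψ → φ x ≠ ψ x) := by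
    intro φ ψ
    by_cases h : φ = ψ
    · exact ⟨1, fun hc => absurd h hc⟩
    · by_contra hc
      push_neg at hc
      exact h (MonoidHom.ext fun x => (hc x).2)
  choose w hw using sep
  set S₀ : Finset X := T.biUnion (fun φ => T.image (w φ)) with hS₀
  obtain ⟨S, hScard, hSclo⟩ := hr (Subgroup.closure (S₀ : Set X)) ⟨S₀, rfl⟩
  have key : Function.Injective (fun (φ : ↥T) (s : ↥(S : Finset X)) => (φ : X →* F) (s : X)) := by
    intro φ ψ h
    have heq : Set.EqOn ⇑(φ : X →* F) ⇑(ψ : X →* F) ((S : Finset X) : Set X) := by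
      intro x hx
      exact congrFun h ⟨x, hx⟩
    have heq2 := MonoidHom.eqOn_closure heq
    rw [hSclo] at heq2
    have hmem : w (φ : X →* F) (ψ : X →* F) ∈ Subgroup.closure ((S₀ : Finset X) : Set X) := by
      apply Subgroup.subset_closure
      rw [Finset.mem_coe, hS₀]
      exact Finset.mem_biUnion.mpr ⟨(φ : X →* F), φ.2, Finset.mem_image_of_mem _ ψ.2⟩
    by_cases hne : (φ : X →* F) = (ψ : X →* F)
    · exact Subtype.ext hne
    · exact absurd (heq2 hmem) (hw _ _ hne)
  have hle : T.card ≤ Fintype.card F ^ r := by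
    have := Fintype.card_le_of_injective _ key
    rw [Fintype.card_coe] at this
    refine this.trans ?_
    rw [Fintype.card_fun, Fintype.card_coe]
    exact Nat.pow_le_pow_right Fintype.card_pos hScard
  omega

/-- Transporting `Equiv.Perm` along an equiv, as a monoid hom. -/
def auxPermCongrHom {α β : Type*} (e : α ≃ β) : Equiv.Perm α →* Equiv.Perm β where
  toFun p := (e.symm.trans p).trans e
  map_one' := by ext x; simp
  map_mul' p q := by ext x; simp

/-- A group of finite rank has finitely many subgroups of any given index. -/
lemma aux_finite_subgroups_index_eq {X : Type*} [Group X] (hX : HasFiniteRank X)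
    (n : ℕ) (hn : n ≠ 0) : {A : Subgroup X | A.index = n}.Finite := by
  classical
  haveI : Finite (X →* Equiv.Perm (Fin n)) := aux_finite_homs hX
  rw [Set.finite_coe_iff.symm]
  have key : ∀ A : {A : Subgroup X | A.index = n},
      ∃ (φ : X →* Equiv.Perm (Fin n)) (p : Fin n), ∀ x, x ∈ (A : Subgroup X) ↔ φ x p = p := by
    rintro ⟨A, hA⟩
    have hA' : Nat.card (X ⧸ A) ≠ 0 := by
      have : A.index = n := hA
      rw [Subgroup.index] at this
      omega
    haveI : Finite (X ⧸ A) := (Nat.card_ne_zero.mp hA').2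
    haveI : Fintype (X ⧸ A) := Fintype.ofFinite _
    have hcard : Fintype.card (X ⧸ A) = n := by
      rw [← Nat.card_eq_fintype_card]; exact hA
    let e : (X ⧸ A) ≃ Fin n := Fintype.equivFinOfCardEq hcard
    refine ⟨(auxPermCongrHom e).comp (MulAction.toPermHom X (X ⧸ A)), e ((1 : X) : X ⧸ A), ?_⟩
    intro x
    have h1 : ((auxPermCongrHom e).comp (MulAction.toPermHom X (X ⧸ A))) x (e ((1 : X) : X ⧸ A))
        = e (x • ((1 : X) : X ⧸ A)) := by
      simp [auxPermCongrHom, MulAction.toPermHom_apply]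
    rw [h1]
    constructor
    · intro hx
      have : x • ((1 : X) : X ⧸ A) = ((1 : X) : X ⧸ A) := by
        have hx' : x ∈ MulAction.stabilizer X ((1 : X) : X ⧸ A) := by
          rw [MulAction.stabilizer_quotient]; exact hx
        exact hx'
      rw [this]
    · intro hx
      have : x • ((1 : X) : X ⧸ A) = ((1 : X) : X ⧸ A) := e.injective hx
      have : x ∈ MulAction.stabilizer X ((1 : X) : X ⧸ A) := this
      rwa [MulAction.stabilizer_quotient] at this
  choose φ p hφ using key
  have hinj : Function.Injective (fun A => (φ A, p A)) := by
    intro A B hAB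
    rw [Prod.mk.injEq] at hAB
    refine Subtype.ext (Subgroup.ext fun x => ?_)
    rw [hφ A x, hφ B x, hAB.1, hAB.2]
  exact Finite.of_injective _ hinj

/-- A group of finite rank has finitely many subgroups of bounded nonzero index. -/
lemma aux_finite_subgroups_index_le {X : Type*} [Group X] (hX : HasFiniteRank X)
    (c : ℕ) : {A : Subgroup X | A.index ≠ 0 ∧ A.index ≤ c}.Finite := by
  have hsub : {A : Subgroup X | A.index ≠ 0 ∧ A.index ≤ c} ⊆
      ⋃ n ∈ Set.Icc 1 c, {A : Subgroup X | A.index = n} := by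
    rintro A ⟨h1, h2⟩
    exact Set.mem_biUnion ⟨Nat.one_le_iff_ne_zero.mpr h1, h2⟩ rfl
  exact Set.Finite.subset (Set.Finite.biUnion (Set.finite_Icc 1 c)
    (fun n hn => aux_finite_subgroups_index_eq hX n (Nat.one_le_iff_ne_zero.mp hn.1))) hsub

/-- Finite rank passes to subgroups. -/
lemma aux_hasFiniteRank_of_le {G : Type*} [Group G] {K H : Subgroup G} (hKH : K ≤ H)
    (h : HasFiniteRank H) : HasFiniteRank K := by
  classical
  obtain ⟨r, hr⟩ := h
  refine ⟨r, fun A hA => ?_⟩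
  set ι : ↥K →* ↥H := Subgroup.inclusion hKH with hι
  have hιinj : Function.Injective ι := Subgroup.inclusion_injective hKH
  obtain ⟨SA, hSA⟩ := hA
  have hAfg : (A.map ι).FG := by
    refine ⟨SA.image ι, ?_⟩
    rw [Finset.coe_image, ← MonoidHom.map_closure, hSA]
  obtain ⟨S, hScard, hSclo⟩ := hr (A.map ι) hAfg
  set f : ↥H → ↥K := Function.invFun ι with hf
  refine ⟨S.image f, (Finset.card_image_le).trans hScard, ?_⟩
  have himg : ι '' (f '' (S : Set ↥H)) = (S : Set ↥H) := by
    ext x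
    constructor
    · rintro ⟨y, ⟨s, hs, rfl⟩, rfl⟩
      have hsA : s ∈ A.map ι := hSclo ▸ Subgroup.subset_closure hs
      obtain ⟨a, _, ha⟩ := hsA
      simpa [hf, ← ha, Function.leftInverse_invFun hιinj a] using hs
    · intro hx
      refine ⟨f x, ⟨x, hx, rfl⟩, ?_⟩
      have hsA : x ∈ A.map ι := hSclo ▸ Subgroup.subset_closure hx
      obtain ⟨a, _, ha⟩ := hsA
      rw [hf, ← ha, Function.leftInverse_invFun hιinj a]
  apply Subgroup.map_injective hιinj
  rw [MonoidHom.map_closure, Finset.coe_image, himg, hSclo]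

/-- Conjugation action on subgroups as a `map` along `MulAut.conj`. -/
lemma aux_conj_smul_eq_map {G : Type*} [Group G] (g : ConjAct G) (A : Subgroup G) :
    g • A = A.map (MulAut.conj (ConjAct.ofConjAct g)).toMonoidHom := by
  ext x
  rw [Subgroup.mem_pointwise_smul_iff_inv_smul_mem, Subgroup.mem_map_equiv]
  simp [ConjAct.smul_def, MulAut.conj_symm_apply, mul_assoc]

/-- The relative index in a normal subgroup is invariant under conjugation. -/
lemma aux_relIndex_conj {G : Type*} [Group G] (g : ConjAct G) (A N : Subgroup G)
    (hN : N.Normal) : (g • A).relIndex N = A.relIndex N := by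
  set e := MulAut.conj (ConjAct.ofConjAct g) with he
  have hNmap : N.map e.toMonoidHom = N := by
    rw [← aux_conj_smul_eq_map, hN.conjAct g]
  rw [aux_conj_smul_eq_map]
  conv_rhs => rw [← Subgroup.comap_map_eq_self_of_injective (f := e.toMonoidHom) e.injective A]
  rw [Subgroup.relIndex_comap, hNmap]

end Aux

theorem isCF_iff_isCN_of_finiteRank {G : Type*} [Group G] (H : Subgroup G) :
    (H.normalCore.relIndex H ≠ 0 → Subgroup.Commensurable H H.normalCore) ∧
    (HasFiniteRank H → IsCN H → H.normalCore.relIndex H ≠ 0) := by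
  constructor
  · intro h
    refine ⟨?_, h⟩
    show (H.subgroupOf H.normalCore).index ≠ 0
    rw [subgroupOf_eq_top.mpr H.normalCore_le, index_top]
    exact one_ne_zero
  · intro hr hCN
    obtain ⟨N, hN, hcomm⟩ := hCN
    set K := H ⊓ N with hK
    have hKH : K ≤ H := inf_le_left
    have hKN : K ≤ N := inf_le_right
    have hKNrel : K.relIndex N ≠ 0 := by
      rw [hK, inf_relIndex_right]; exact hcomm.1
    have hKHrel : K.relIndex H ≠ 0 := by
      rw [hK, inf_relIndex_left]; exact hcomm.2
    set m := K.relIndex N with hm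
    have hconjrel : ∀ g : ConjAct G, (g • K).relIndex N = m := fun g =>
      aux_relIndex_conj g K N hN
    set fB : ConjAct G → Subgroup G := fun g => (g • K) ⊓ K with hfB
    have hBle : ∀ g, fB g ≤ K := fun g => inf_le_right
    have hBrelN : ∀ g, (fB g).relIndex N ≠ 0 := fun g =>
      relIndex_inf_ne_zero (by rw [hconjrel g]; exact hKNrel) hKNrel
    have hBrelNle : ∀ g, (fB g).relIndex N ≤ m * m := fun g => by
      refine (relIndex_inf_le).trans ?_
      rw [hconjrel g]
    have hBmul : ∀ g, (fB g).relIndex K * K.relIndex N = (fB g).relIndex N := fun g =>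
      relIndex_mul_relIndex _ _ _ (hBle g) hKN
    have hBrelK : ∀ g, (fB g).relIndex K ≠ 0 := fun g => by
      intro h0
      apply hBrelN g
      rw [← hBmul g, h0, zero_mul]
    have hBrelKle : ∀ g, (fB g).relIndex K ≤ m * m := fun g =>
      le_trans (Nat.le_of_dvd (Nat.pos_of_ne_zero (hBrelN g))
        ⟨K.relIndex N, (hBmul g).symm⟩) (hBrelNle g)
    have hrK : HasFiniteRank ↥K := aux_hasFiniteRank_of_le hKH hr
    have hSfin : {B : Subgroup G | B ≤ K ∧ B.relIndex K ≠ 0 ∧ B.relIndex K ≤ m * m}.Finite := by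
      apply Set.Finite.of_finite_image (f := fun B : Subgroup G => B.subgroupOf K)
      · refine Set.Finite.subset (aux_finite_subgroups_index_le hrK (m * m)) ?_
        rintro A ⟨B, ⟨-, h2, h3⟩, rfl⟩
        exact ⟨h2, h3⟩
      · rintro B₁ ⟨hB₁, -, -⟩ B₂ ⟨hB₂, -, -⟩ heq
        have := congrArg (fun A : Subgroup ↥K => A.map K.subtype) heq
        simpa [Subgroup.subgroupOf_map_subtype, inf_eq_left.mpr hB₁,
          inf_eq_left.mpr hB₂] using this
    have hrange : (Set.range fB).Finite := by
      refine hSfin.subset ?_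
      rintro B ⟨g, rfl⟩
      exact ⟨hBle g, hBrelK g, hBrelKle g⟩
    haveI := hrange.to_subtype
    have hLrelK : (⨅ g, fB g).relIndex K ≠ 0 := by
      rw [← sInf_range, sInf_eq_iInf']
      refine relIndex_iInf_ne_zero fun B => ?_
      obtain ⟨g, hg⟩ := B.2
      rw [← hg]
      exact hBrelK g
    have hLeq : (⨅ g, fB g) = K.normalCore := by
      rw [normalCore_eq_iInf_conjAct]
      apply le_antisymm
      · exact le_iInf fun g => (iInf_le fB g).trans inf_le_left
      · exact le_iInf fun g => le_inf (iInf_le _ g) ((iInf_le _ 1).trans (by rw [one_smul]))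
    have h1 : K.normalCore.relIndex K ≠ 0 := hLeq ▸ hLrelK
    have h2 : K.normalCore.relIndex H ≠ 0 := by
      rw [← relIndex_mul_relIndex K.normalCore K H K.normalCore_le hKH]
      exact mul_ne_zero h1 hKHrel
    have h3 : K.normalCore ≤ H.normalCore := normalCore_mono hKH
    intro h0
    exact h2 (relIndex_eq_zero_of_le_left h3 h0)
end

section
/- Let G be a periodic group of finite rank whose derived subgroup G' is finite. Then the center Z(G) has finite index in G. -/
open Subgroup
open scoped commutatorElement

section Aux

variable {G : Type*} [Group G]

/-- Finite rank passes to subgroups. -/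
lemma hasFiniteRank_subgroup (hrk : HasFiniteRank G) (H : Subgroup G) :
    HasFiniteRank ↥H := by
  classical
  obtain ⟨r, hr⟩ := hrk
  refine ⟨r, fun P hP => ?_⟩
  obtain ⟨T, hT⟩ := hP
  have hfg : (P.map H.subtype).FG := by
    refine ⟨T.image H.subtype, ?_⟩
    rw [Finset.coe_image, ← MonoidHom.map_closure, hT]
  obtain ⟨S, hScard, hSclos⟩ := hr _ hfg
  have hSH : ∀ s ∈ S, s ∈ H := by
    intro s hs
    have h1 : s ∈ P.map H.subtype := by
      rw [← hSclos]; exact subset_closure hs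
    exact (map_subtype_le P) h1
  have himg : H.subtype '' ((S.attach.image (fun s => (⟨s.1, hSH s.1 s.2⟩ : ↥H)) : Finset ↥H)
      : Set ↥H) = (S : Set G) := by
    ext x
    constructor
    · rintro ⟨y, hy, rfl⟩
      obtain ⟨s, _, rfl⟩ := Finset.mem_image.mp (Finset.mem_coe.mp hy)
      exact s.2
    · intro hx
      exact ⟨⟨x, hSH x hx⟩,
        Finset.mem_coe.mpr (Finset.mem_image.mpr ⟨⟨x, hx⟩, Finset.mem_attach _ _, rfl⟩), rfl⟩
  refine ⟨S.attach.image (fun s => (⟨s.1, hSH s.1 s.2⟩ : ↥H)),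
    le_trans Finset.card_image_le (by simpa using hScard), ?_⟩
  apply Subgroup.map_injective H.subtype_injective
  rw [MonoidHom.map_closure, himg, hSclos]

/-- Finite rank passes to quotients (surjective images). -/
lemma hasFiniteRank_of_surjective {Q : Type*} [Group Q] (f : G →* Q)
    (hf : Function.Surjective f) (hrk : HasFiniteRank G) : HasFiniteRank Q := by
  classical
  obtain ⟨r, hr⟩ := hrk
  refine ⟨r, fun P hP => ?_⟩
  obtain ⟨T, hT⟩ := hP
  choose pre hpre using hf
  obtain ⟨S, hScard, hSclos⟩ := hr (closure ↑(T.image pre)) ⟨T.image pre, rfl⟩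
  refine ⟨S.image f, le_trans (Finset.card_image_le) hScard, ?_⟩
  rw [Finset.coe_image, ← MonoidHom.map_closure, hSclos, MonoidHom.map_closure, ← hT]
  congr 1
  rw [Finset.coe_image, Set.image_image]
  ext q
  simp [hpre]

/-- An abelian group of finite exponent and finite rank is finite. -/
lemma finite_of_rank_exponent {Q : Type*} [CommGroup Q] {m : ℕ} (hm : m ≠ 0)
    (hexp : ∀ q : Q, q ^ m = 1) (hrk : HasFiniteRank Q) : Finite Q := by
  classical
  haveI : NeZero m := ⟨hm⟩
  obtain ⟨r, hr⟩ := hrk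
  by_contra hinf
  rw [not_finite_iff_infinite] at hinf
  have hm1 : m ≠ 1 := by
    rintro rfl
    have hsub : Subsingleton Q :=
      subsingleton_of_forall_eq 1 fun q => by rw [← pow_one q, hexp q]
    exact (not_finite_iff_infinite.mpr hinf) Finite.of_subsingleton
  have hm2 : 1 < m := lt_of_le_of_ne (Nat.one_le_iff_ne_zero.mpr hm) (Ne.symm hm1)
  haveI : Fact (1 < m) := ⟨hm2⟩
  have key : ∀ S : Finset Q, S.card ≤ r →
      ((closure (S : Set Q) : Set Q)).Finite ∧
        ((closure (S : Set Q) : Set Q)).ncard ≤ m ^ r := by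
    intro S hS
    set ψfun : (↥S → ZMod m) → Q := fun a => ∏ i : ↥S, (i.1 : Q) ^ (a i).val with hψ
    have hmod : ∀ (g : Q) (n : ℕ), g ^ (n % m) = g ^ n := by
      intro g n
      conv_rhs => rw [pow_eq_pow_mod n (hexp g)]
    have hhom : ∀ a b : ↥S → ZMod m, ψfun (a + b) = ψfun a * ψfun b := by
      intro a b
      rw [hψ]
      simp only [← Finset.prod_mul_distrib]
      apply Finset.prod_congr rfl
      intro i _
      rw [Pi.add_apply, ZMod.val_add, hmod, pow_add]
    let ψ : Multiplicative (↥S → ZMod m) →* Q :=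
      MonoidHom.mk' (fun a => ψfun (Multiplicative.toAdd a)) (fun a b => hhom _ _)
    have hrange : (closure (S : Set Q) : Set Q) ⊆ Set.range ψ := by
      have hle : closure (S : Set Q) ≤ ψ.range := by
        rw [closure_le]
        intro s hs
        have hprod : (∏ i : ↥S,
            ((i : Q)) ^ ((Pi.single (⟨s, hs⟩ : ↥S) (1 : ZMod m) : ↥S → ZMod m) i).val) = s := by
          rw [Fintype.prod_eq_single (⟨s, hs⟩ : ↥S)
            (fun j hj => by rw [Pi.single_eq_of_ne hj]; simp)]
          simp [ZMod.val_one]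
        exact ⟨Multiplicative.ofAdd (Pi.single (⟨s, hs⟩ : ↥S) (1 : ZMod m)), hprod⟩
      exact fun x hx => hle hx
    have hfin : (Set.range ψ).Finite := Set.finite_range _
    refine ⟨hfin.subset hrange, ?_⟩
    calc ((closure (S : Set Q) : Set Q)).ncard ≤ (Set.range ψ).ncard :=
          Set.ncard_le_ncard hrange hfin
      _ ≤ Nat.card (Multiplicative (↥S → ZMod m)) := by
          rw [← Set.ncard_univ, ← Set.image_univ]
          exact Set.ncard_image_le Set.finite_univ
      _ = m ^ S.card := by
          rw [Nat.card_congr (Multiplicative.toAdd (α := ↥S → ZMod m)), Nat.card_fun,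
            Nat.card_zmod, Nat.card_eq_fintype_card, Fintype.card_coe]
      _ ≤ m ^ r := Nat.pow_le_pow_right (le_of_lt hm2) hS
  obtain ⟨t, ht⟩ := Infinite.exists_subset_card_eq Q (m ^ r + 1)
  obtain ⟨S, hScard, hSclos⟩ := hr (closure ↑t) ⟨t, rfl⟩
  obtain ⟨hfin, hcard⟩ := key S hScard
  rw [hSclos] at hfin hcard
  have h2 : t.card ≤ ((closure (↑t : Set Q) : Set Q)).ncard := by
    rw [← Set.ncard_coe_finset t]
    exact Set.ncard_le_ncard subset_closure hfin
  omega

/-- In any group, if `x * z = c * z * x` with `x` commuting with `c`,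
then `x ^ n * z = c ^ n * z * x ^ n`. -/
lemma pow_mul_of_conj {x z c : G} (h : x * z = c * z * x) (hc : Commute x c) (n : ℕ) :
    x ^ n * z = c ^ n * z * x ^ n := by
  induction n with
  | zero => simp
  | succ n ih =>
    have hxc : x * c ^ n = c ^ n * x := (hc.pow_right n).eq
    calc x ^ (n + 1) * z = x * (x ^ n * z) := by rw [pow_succ']; rw [mul_assoc]
      _ = x * (c ^ n * z * x ^ n) := by rw [ih]
      _ = (x * c ^ n) * z * x ^ n := by simp [mul_assoc]
      _ = c ^ n * (x * z) * x ^ n := by rw [hxc]; simp [mul_assoc]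
      _ = c ^ n * (c * z * x) * x ^ n := by rw [h]
      _ = c ^ (n + 1) * z * x ^ (n + 1) := by
          rw [pow_succ, pow_succ']
          simp [mul_assoc]

end Aux

theorem lemma_zf {G : Type*} [Group G] (hper : ∀ g : G, IsOfFinOrder g)
    (hrk : HasFiniteRank G) (hfin : Finite (commutator G)) :
    (Subgroup.center G).index ≠ 0 := by
  classical
  set m := Nat.card (commutator G) with hmdef
  have hm0 : m ≠ 0 := Nat.card_ne_zero.mpr ⟨⟨⟨1, one_mem _⟩⟩, hfin⟩
  have hcm : ∀ c ∈ commutator G, c ^ m = 1 := by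
    intro c hc
    have h1 : (⟨c, hc⟩ : commutator G) ^ m = 1 := pow_card_eq_one'
    have h2 := congrArg (Subtype.val) h1
    simpa using h2
  have hmemcomm : ∀ x y : G, ⁅x, y⁆ ∈ commutator G := by
    intro x y
    have h : commutator G = ⁅(⊤ : Subgroup G), ⊤⁆ := rfl
    rw [h]
    exact Subgroup.commutator_mem_commutator (mem_top _) (mem_top _)
  -- every centralizer has finite index
  have hcent : ∀ g : G, (Subgroup.centralizer {g}).FiniteIndex := by
    intro g
    constructor
    rw [Subgroup.centralizer_eq_comap_stabilizer]
    erw [Subgroup.index_comap_of_surjective _ (f := ConjAct.toConjAct.toMonoidHom) (MulEquiv.surjective (ConjAct.toConjAct : G ≃* ConjAct G)),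
      MulAction.index_stabilizer]
    have horb : MulAction.orbit (ConjAct G) g ⊆ (fun c => c * g) '' (commutator G : Set G) := by
      rintro x ⟨c, rfl⟩
      refine ⟨⁅ConjAct.ofConjAct c, g⁆, hmemcomm _ _, ?_⟩
      show ⁅ConjAct.ofConjAct c, g⁆ * g = c • g
      rw [ConjAct.smul_def, commutatorElement_def]
      group
    have hfin' : (MulAction.orbit (ConjAct G) g).Finite :=
      (Set.Finite.image _ (Set.toFinite _)).subset horb
    have hne : (MulAction.orbit (ConjAct G) g).Nonempty := ⟨g, MulAction.mem_orbit_self g⟩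
    have hpos := (Set.ncard_pos hfin').mpr hne
    omega
  -- the centralizer C of the commutator subgroup
  set C := Subgroup.centralizer ((commutator G : Subgroup G) : Set G) with hCdef
  have hCfi : C.FiniteIndex := by
    have hCeq : C = ⨅ c : commutator G, Subgroup.centralizer {(c : G)} := by
      ext x
      simp only [Subgroup.mem_iInf, hCdef, Subgroup.mem_centralizer_iff]
      constructor
      · rintro h c y rfl
        exact h c c.2
      · intro h g hg
        exact h ⟨g, hg⟩ g rfl
    rw [hCeq]
    exact Subgroup.finiteIndex_iInf fun c => hcent _
  have hcomm_central : ∀ w : G, w ∈ commutator G → ∀ z ∈ C, w * z = z * w :=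
    fun w hw z hz => Subgroup.mem_centralizer_iff.mp hz w hw
  -- elements of C whose image is in the commutator subgroup are central in C
  have hKcentral : ∀ w : ↥C, (w : G) ∈ commutator G → w ∈ Subgroup.center ↥C := by
    intro w hw
    rw [Subgroup.mem_center_iff]
    intro z
    exact Subtype.ext ((hcomm_central _ hw _ z.2).symm)
  have hQab : ∀ a b : ↥C ⧸ Subgroup.center ↥C, a * b = b * a := by
    intro a b
    induction a using QuotientGroup.induction_on with
    | H x =>
    induction b using QuotientGroup.induction_on with
    | H y =>
    show QuotientGroup.mk (x * y) = QuotientGroup.mk (y * x)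
    rw [QuotientGroup.eq]
    apply hKcentral
    have hcoe : ((((x * y)⁻¹ * (y * x) : ↥C)) : G) = ⁅(y : G)⁻¹, (x : G)⁻¹⁆ := by
      simp only [MulMemClass.coe_mul, InvMemClass.coe_inv, commutatorElement_def]
      group
    rw [hcoe]
    exact hmemcomm _ _
  have hQexp : ∀ q : ↥C ⧸ Subgroup.center ↥C, q ^ m = 1 := by
    intro q
    induction q using QuotientGroup.induction_on with
    | H x =>
    show (QuotientGroup.mk x : ↥C ⧸ Subgroup.center ↥C) ^ m = 1
    rw [← QuotientGroup.mk_pow, QuotientGroup.eq_one_iff]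
    rw [Subgroup.mem_center_iff]
    intro z
    apply Subtype.ext
    simp only [MulMemClass.coe_mul, SubmonoidClass.coe_pow]
    have h : (x : G) * (z : G) = ⁅(x : G), (z : G)⁆ * (z : G) * (x : G) := by
      rw [commutatorElement_def]; group
    have hc : Commute (x : G) ⁅(x : G), (z : G)⁆ :=
      (hcomm_central _ (hmemcomm _ _) _ x.2).symm
    have hkey := pow_mul_of_conj h hc m
    rw [hcm _ (hmemcomm (x : G) (z : G))] at hkey
    simp only [one_mul] at hkey
    exact hkey.symm
  -- the quotient is a finite abelian group
  letI : CommGroup (↥C ⧸ Subgroup.center ↥C) :=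
    { (inferInstance : Group (↥C ⧸ Subgroup.center ↥C)) with mul_comm := hQab }
  have hrkQ : HasFiniteRank (↥C ⧸ Subgroup.center ↥C) :=
    hasFiniteRank_of_surjective (QuotientGroup.mk' (Subgroup.center ↥C))
      (QuotientGroup.mk'_surjective (Subgroup.center ↥C))
      (hasFiniteRank_subgroup hrk C)
  have hQfin : Finite (↥C ⧸ Subgroup.center ↥C) := finite_of_rank_exponent hm0 hQexp hrkQ
  have hZKidx : (Subgroup.center ↥C).index ≠ 0 := by
    have heq : (Subgroup.center ↥C).index = Nat.card (↥C ⧸ Subgroup.center ↥C) := rfl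
    rw [heq]
    exact Nat.card_ne_zero.mpr ⟨⟨1⟩, hQfin⟩
  -- the subgroup A of elements of C central in C
  set A := C ⊓ Subgroup.centralizer (C : Set G) with hAdef
  have hAC : A ≤ C := inf_le_left
  have hAsub : A.subgroupOf C = Subgroup.center ↥C := by
    ext x
    rw [Subgroup.mem_subgroupOf, hAdef, Subgroup.mem_inf, Subgroup.mem_center_iff]
    constructor
    · intro hx z
      exact Subtype.ext (Subgroup.mem_centralizer_iff.mp hx.2 _ z.2)
    · intro hx
      refine ⟨x.2, Subgroup.mem_centralizer_iff.mpr fun g hg => ?_⟩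
      exact congrArg Subtype.val (hx ⟨g, hg⟩)
  have hAidx : A.index ≠ 0 := by
    rw [← Subgroup.relIndex_mul_index hAC]
    apply mul_ne_zero
    · show A.relIndex C ≠ 0
      unfold Subgroup.relIndex
      rw [hAsub]
      exact hZKidx
    · exact hCfi.index_ne_zero
  have hQAfin : Finite (G ⧸ A) := by
    have : Nat.card (G ⧸ A) ≠ 0 := hAidx
    exact (Nat.card_ne_zero.mp this).2
  -- the finite-index subgroup contained in the center
  set Z' := A ⊓ ⨅ q : G ⧸ A, Subgroup.centralizer {(q.out : G)} with hZ'def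
  have hZ'le : Z' ≤ Subgroup.center G := by
    intro z hz
    rw [Subgroup.mem_inf] at hz
    obtain ⟨hzA, hziInf⟩ := hz
    rw [Subgroup.mem_center_iff]
    intro g
    obtain ⟨h, hh⟩ := QuotientGroup.mk_out_eq_mul A g
    have hg : g = (QuotientGroup.mk g : G ⧸ A).out * (h : G)⁻¹ := by
      rw [hh]; group
    have hzout : (QuotientGroup.mk g : G ⧸ A).out * z = z * (QuotientGroup.mk g : G ⧸ A).out := by
      have := Subgroup.mem_iInf.mp hziInf (QuotientGroup.mk g)
      exact Subgroup.mem_centralizer_iff.mp this _ rfl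
    have hzh : (h : G)⁻¹ * z = z * (h : G)⁻¹ := by
      have hA : z ∈ Subgroup.centralizer (C : Set G) := hzA.2
      exact Subgroup.mem_centralizer_iff.mp hA _ (C.inv_mem (hAC h.2))
    rw [hg, mul_assoc, hzh, ← mul_assoc, hzout, mul_assoc]
  have hZ'idx : Z'.index ≠ 0 := by
    haveI h1 : A.FiniteIndex := ⟨hAidx⟩
    haveI h2 : (⨅ q : G ⧸ A, Subgroup.centralizer {(q.out : G)}).FiniteIndex :=
      Subgroup.finiteIndex_iInf fun q => hcent _
    exact (inferInstance : Z'.FiniteIndex).index_ne_zero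
  have hdvd : (Subgroup.center G).index ∣ Z'.index := Subgroup.index_dvd_of_le hZ'le
  intro h0
  rw [h0] at hdvd
  exact hZ'idx (zero_dvd_iff.mp hdvd)
end

section
/- Let G be a group in which every subnormal subgroup of infinite rank is commensurable with a normal subgroup, let X be a subnormal subgroup of finite rank of G, and suppose there exist normal subgroups S₃ and S₄ of G of infinite rank with S₃ ∩ S₄ = {1}, X ∩ S₃S₄ = {1}. Then X is commensurable with a normal subgroup of G. -/
/-- Finite rank passes to subgroups (stated for subgroups of an ambient group). -/
lemma hasFiniteRank_of_le {G : Type*} [Group G] {H K : Subgroup G} (h : H ≤ K)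
    (hK : HasFiniteRank K) : HasFiniteRank H := by
  classical
  obtain ⟨r, hr⟩ := hK
  refine ⟨r, fun L hL => ?_⟩
  set f : H →* K := Subgroup.inclusion h with hf
  have hinj : Function.Injective f := Subgroup.inclusion_injective h
  have hLmap : (L.map f).FG := by
    obtain ⟨S, hS⟩ := hL
    rw [Subgroup.fg_iff]
    exact ⟨f '' (S : Set H), by rw [← MonoidHom.map_closure, hS], (S.finite_toSet).image f⟩
  obtain ⟨S, hScard, hScl⟩ := hr (L.map f) hLmap
  have hmem : ∀ s ∈ S, s ∈ L.map f := fun s hs => by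
    rw [← hScl]; exact Subgroup.subset_closure hs
  choose g hg hg' using fun s hs => Subgroup.mem_map.mp (hmem s hs)
  refine ⟨S.attach.image (fun s => g s.1 s.2), ?_, ?_⟩
  · exact Finset.card_image_le.trans (by simpa using hScard)
  · apply Subgroup.map_injective hinj
    rw [MonoidHom.map_closure]
    have himg : f '' ((S.attach.image (fun s => g s.1 s.2) : Finset H) : Set H)
        = (S : Set K) := by
      ext x
      simp only [Finset.coe_image, Set.mem_image, Finset.mem_coe, Finset.mem_attach,
        true_and]
      constructor
      · rintro ⟨y, ⟨⟨s, hs⟩, rfl⟩, rfl⟩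
        rw [hg']; exact hs
      · intro hx
        exact ⟨g x hx, ⟨⟨x, hx⟩, rfl⟩, hg' x hx⟩
    rw [himg, hScl]

/-- The join of a subnormal subgroup with a normal subgroup is subnormal. -/
lemma isSubnormal_sup {G : Type*} [Group G] {X N : Subgroup G} (hX : IsSubnormal X)
    (hN : N.Normal) : IsSubnormal (X ⊔ N) := by
  obtain ⟨n, c, hc0, hcn, hc⟩ := hX
  refine ⟨n, fun i => c i ⊔ N, by simp [hc0], by simp [hcn], fun i hi => ?_⟩
  obtain ⟨hle, hnor⟩ := hc i hi
  have hle' : c i ⊔ N ≤ c (i + 1) ⊔ N := sup_le_sup_right hle N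
  refine ⟨hle', (Subgroup.normal_subgroupOf_iff hle').mpr ?_⟩
  intro h k hh hk
  rw [← SetLike.mem_coe, Subgroup.mul_normal] at hh hk
  obtain ⟨x, hx, m, hm, hxm⟩ := hh
  obtain ⟨a, ha, s, hs, has⟩ := hk
  have hxm : x * m = h := hxm
  have has : a * s = k := has
  subst hxm has
  have hy : a * x * a⁻¹ ∈ c i := (Subgroup.normal_subgroupOf_iff hle).mp hnor x a hx ha
  have hn1 : x⁻¹ * s * x ∈ N := by
    have := hN.conj_mem s hs x⁻¹
    rwa [inv_inv] at this
  have hn2 : a * (x⁻¹ * s * x * m * s⁻¹) * a⁻¹ ∈ N :=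
    hN.conj_mem _ (mul_mem (mul_mem hn1 hm) (inv_mem hs)) a
  have key : (a * s) * (x * m) * (a * s)⁻¹
      = (a * x * a⁻¹) * (a * (x⁻¹ * s * x * m * s⁻¹) * a⁻¹) := by group
  rw [key]
  exact mul_mem ((le_sup_left : c i ≤ c i ⊔ N) hy) ((le_sup_right : N ≤ c i ⊔ N) hn2)

/-- Intersections of commensurable pairs are commensurable. -/
lemma commensurable_inf {G : Type*} [Group G] {A B C D : Subgroup G}
    (h1 : Subgroup.Commensurable A B) (h2 : Subgroup.Commensurable C D) :
    Subgroup.Commensurable (A ⊓ C) (B ⊓ D) := by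
  constructor
  · exact Subgroup.relIndex_inf_ne_zero
      (mt (Subgroup.relIndex_eq_zero_of_le_right inf_le_left) h1.1)
      (mt (Subgroup.relIndex_eq_zero_of_le_right inf_le_right) h2.1)
  · exact Subgroup.relIndex_inf_ne_zero
      (mt (Subgroup.relIndex_eq_zero_of_le_right inf_le_left) h1.2)
      (mt (Subgroup.relIndex_eq_zero_of_le_right inf_le_right) h2.2)

theorem lemma_complement {G : Type*} [Group G]
    (hT : ∀ H : Subgroup G, IsSubnormal H → ¬ HasFiniteRank H → IsCN H)
    (X : Subgroup G) (hX : IsSubnormal X) (hXrk : HasFiniteRank X)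
    (S₃ S₄ : Subgroup G) (h3n : S₃.Normal) (h4n : S₄.Normal)
    (h3rk : ¬ HasFiniteRank S₃) (h4rk : ¬ HasFiniteRank S₄)
    (h34 : S₃ ⊓ S₄ = ⊥) (hX34 : X ⊓ (S₃ ⊔ S₄) = ⊥) :
    IsCN X := by
  haveI := h3n; haveI := h4n
  -- X = (X ⊔ S₃) ⊓ (X ⊔ S₄)
  have hXeq : (X ⊔ S₃) ⊓ (X ⊔ S₄) = X := by
    apply le_antisymm
    · intro w hw
      obtain ⟨hw3, hw4⟩ := Subgroup.mem_inf.mp hw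
      rw [← SetLike.mem_coe, Subgroup.mul_normal] at hw3 hw4
      obtain ⟨x, hx, s, hs, hxs⟩ := hw3
      obtain ⟨y, hy, t, ht, hyt⟩ := hw4
      have hxs : x * s = w := hxs
      have hyt : y * t = w := hyt
      subst hxs
      have h2 : y⁻¹ * x = t * s⁻¹ := by
        rw [inv_mul_eq_iff_eq_mul, ← mul_assoc, hyt, mul_assoc, mul_inv_cancel, mul_one]
      have h1 : y⁻¹ * x ∈ X ⊓ (S₃ ⊔ S₄) := by
        refine Subgroup.mem_inf.mpr ⟨mul_mem (inv_mem hy) hx, ?_⟩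
        rw [h2]
        exact mul_mem ((le_sup_right : S₄ ≤ S₃ ⊔ S₄) ht)
          ((le_sup_left : S₃ ≤ S₃ ⊔ S₄) (inv_mem hs))
      rw [hX34, Subgroup.mem_bot] at h1
      have hts : t * s⁻¹ = 1 := by rw [← h2, h1]
      have hst : s = t := by
        rw [← one_mul s, ← hts, mul_assoc, inv_mul_cancel, mul_one]
      have hsbot : s ∈ S₃ ⊓ S₄ := ⟨hs, hst ▸ ht⟩
      rw [h34, Subgroup.mem_bot] at hsbot
      rw [hsbot, mul_one]
      exact hx
    · exact le_inf le_sup_left le_sup_left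
  have hs3 : IsSubnormal (X ⊔ S₃) := isSubnormal_sup hX h3n
  have hs4 : IsSubnormal (X ⊔ S₄) := isSubnormal_sup hX h4n
  have hr3 : ¬ HasFiniteRank ↥(X ⊔ S₃) := fun h =>
    h3rk (hasFiniteRank_of_le le_sup_right h)
  have hr4 : ¬ HasFiniteRank ↥(X ⊔ S₄) := fun h =>
    h4rk (hasFiniteRank_of_le le_sup_right h)
  obtain ⟨N₃, hN₃n, hc3⟩ := hT _ hs3 hr3
  obtain ⟨N₄, hN₄n, hc4⟩ := hT _ hs4 hr4
  refine ⟨N₃ ⊓ N₄, ⟨fun n hn g => ⟨hN₃n.conj_mem _ hn.1 g, hN₄n.conj_mem _ hn.2 g⟩⟩, ?_⟩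
  rw [← hXeq]
  exact commensurable_inf hc3 hc4
end

section
/- If H₁ and H₂ are subgroups of a group G, each commensurable with a normal subgroup of G, and the product set H₁H₂ is a subgroup of G, then H₁H₂ is commensurable with a normal subgroup of G. -/
open scoped Pointwise


/-- If `A ≤ B` and `[B : A]` is finite then `A` and `B` are commensurable. -/
lemma commensurable_of_le {G : Type*} [Group G] {A B : Subgroup G} (h : A ≤ B)
    (hfin : A.relIndex B ≠ 0) : Subgroup.Commensurable A B := by
  refine ⟨hfin, ?_⟩
  rw [Subgroup.relIndex, Subgroup.subgroupOf_eq_top.mpr h, Subgroup.index_top]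
  exact one_ne_zero

/-- Transport finiteness of index along a surjection of coset spaces. -/
lemma index_ne_zero_of_surjective {H Q : Type*} [Group H] [Group Q]
    {A : Subgroup H} {P : Subgroup Q} (hA : A.index ≠ 0)
    (f : H ⧸ A → Q ⧸ P) (hf : Function.Surjective f) : P.index ≠ 0 := by
  have h1 : Finite (H ⧸ A) := (Nat.card_ne_zero.mp hA).2
  have h2 : Finite (Q ⧸ P) := Finite.of_surjective f hf
  exact Subgroup.index_ne_zero_of_finite

/-- If `[B : A ⊓ B]` is finite, `B ≤ Q`, `A ⊓ B ≤ P`, and every coset of `P` in `Q`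
meets `B`, then `[Q : P ⊓ Q]` is finite. -/
lemma relIndex_ne_zero_of_covering {G : Type*} [Group G] {A B P Q : Subgroup G}
    (hfin : A.relIndex B ≠ 0) (hBQ : B ≤ Q) (hAB : A ⊓ B ≤ P)
    (hcov : ∀ q : G, q ∈ Q → ∃ b ∈ B, b⁻¹ * q ∈ P) : P.relIndex Q ≠ 0 := by
  rw [Subgroup.relIndex] at hfin ⊢
  refine index_ne_zero_of_surjective hfin
    (fun x => Quotient.liftOn' x
      (fun b => QuotientGroup.mk (⟨(b : G), hBQ b.2⟩ : Q))
      (fun a b hab => ?_)) ?_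
  · rw [QuotientGroup.leftRel_apply, Subgroup.mem_subgroupOf] at hab
    refine QuotientGroup.eq.mpr ?_
    rw [Subgroup.mem_subgroupOf]
    exact hAB ⟨hab, B.mul_mem (B.inv_mem a.2) b.2⟩
  · intro x
    obtain ⟨q, rfl⟩ := QuotientGroup.mk_surjective x
    obtain ⟨b, hb, hbq⟩ := hcov (q : G) q.2
    refine ⟨QuotientGroup.mk (⟨b, hb⟩ : B), ?_⟩
    show QuotientGroup.mk (⟨b, hBQ hb⟩ : Q) = QuotientGroup.mk q
    refine QuotientGroup.eq.mpr ?_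
    rw [Subgroup.mem_subgroupOf]
    exact hbq

theorem mul_isCN {G : Type*} [Group G] (H₁ H₂ : Subgroup G)
    (h1 : IsCN H₁) (h2 : IsCN H₂) (K : Subgroup G)
    (hK : (K : Set G) = {x : G | ∃ a ∈ H₁, ∃ b ∈ H₂, x = a * b}) : IsCN K := by
  obtain ⟨N₁, hN₁, hc1⟩ := h1
  obtain ⟨N₂, hN₂, hc2⟩ := h2
  have hH₁K : H₁ ≤ K := fun a ha => by
    have : a ∈ (K : Set G) := by rw [hK]; exact ⟨a, ha, 1, one_mem _, (mul_one a).symm⟩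
    exact this
  have hH₂K : H₂ ≤ K := fun b hb => by
    have : b ∈ (K : Set G) := by rw [hK]; exact ⟨1, one_mem _, b, hb, (one_mul b).symm⟩
    exact this
  set Q : Subgroup G := N₁ ⊔ K with hQ
  set P : Subgroup G := N₁ ⊔ H₂ with hP
  set D : Subgroup G := N₁ ⊔ (H₂ ⊓ N₂) with hD
  set N : Subgroup G := N₁ ⊔ N₂ with hN
  have hNnormal : N.Normal := Subgroup.sup_normal N₁ N₂
  have hKQ : K ≤ Q := le_sup_right
  have hPQ : P ≤ Q := sup_le le_sup_left (hH₂K.trans hKQ)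
  have hDP : D ≤ P := sup_le le_sup_left (inf_le_left.trans le_sup_right)
  have hDN : D ≤ N := sup_le le_sup_left (inf_le_right.trans le_sup_right)
  have hQmul : (Q : Set G) = (N₁ : Set G) * (K : Set G) := Subgroup.normal_mul N₁ K
  have hPmul : (P : Set G) = (N₁ : Set G) * (H₂ : Set G) := Subgroup.normal_mul N₁ H₂
  have hNmul : (N : Set G) = (N₁ : Set G) * (N₂ : Set G) := Subgroup.normal_mul N₁ N₂
  -- K has finite index in Q = N₁K
  have ri : K.relIndex Q ≠ 0 := by
    refine relIndex_ne_zero_of_covering hc1.1 le_sup_left (inf_le_left.trans hH₁K) ?_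
    intro q hq
    have : q ∈ (N₁ : Set G) * (K : Set G) := by rw [← hQmul]; exact hq
    obtain ⟨n, hn, k, hk, hnk⟩ := this
    exact ⟨n, hn, by rw [← hnk, inv_mul_cancel_left]; exact hk⟩
  -- P = N₁H₂ has finite index in Q = N₁K = N₁H₁H₂
  have rii : P.relIndex Q ≠ 0 := by
    refine relIndex_ne_zero_of_covering hc1.2 (hH₁K.trans hKQ)
      (inf_le_left.trans le_sup_left) ?_
    intro q hq
    have : q ∈ (N₁ : Set G) * (K : Set G) := by rw [← hQmul]; exact hq
    obtain ⟨n, hn, k, hk, hnk⟩ := this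
    have hk' : k ∈ (K : Set G) := hk
    rw [hK] at hk'
    obtain ⟨a, ha, b, hb, hab⟩ := hk'
    refine ⟨a, ha, ?_⟩
    have : a⁻¹ * q = (a⁻¹ * n * a) * b := by
      rw [← hnk, hab]; group
    rw [this]
    exact mul_mem (Subgroup.mem_sup_left (show a⁻¹ * n * a ∈ N₁ by
      simpa using hN₁.conj_mem n hn a⁻¹)) (Subgroup.mem_sup_right hb)
  -- D = N₁(H₂ ⊓ N₂) has finite index in P = N₁H₂
  have riii : D.relIndex P ≠ 0 := by
    refine relIndex_ne_zero_of_covering hc2.2 le_sup_right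
      (le_trans (by rw [inf_comm]) le_sup_right) ?_
    intro p hp
    have : p ∈ (N₁ : Set G) * (H₂ : Set G) := by rw [← hPmul]; exact hp
    obtain ⟨n, hn, h, hh, hnh⟩ := this
    refine ⟨h, hh, ?_⟩
    have : h⁻¹ * p = h⁻¹ * n * h := by rw [← hnh]; group
    rw [this]
    exact Subgroup.mem_sup_left (show h⁻¹ * n * h ∈ N₁ by simpa using hN₁.conj_mem n hn h⁻¹)
  -- D = N₁(H₂ ⊓ N₂) has finite index in N = N₁N₂
  have riv : D.relIndex N ≠ 0 := by
    refine relIndex_ne_zero_of_covering hc2.1 le_sup_right le_sup_right ?_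
    intro m hm
    have : m ∈ (N₁ : Set G) * (N₂ : Set G) := by rw [← hNmul]; exact hm
    obtain ⟨n₁, hn₁, n₂, hn₂, hn⟩ := this
    refine ⟨n₂, hn₂, ?_⟩
    have : n₂⁻¹ * m = n₂⁻¹ * n₁ * n₂ := by rw [← hn]; group
    rw [this]
    exact Subgroup.mem_sup_left (show n₂⁻¹ * n₁ * n₂ ∈ N₁ by simpa using hN₁.conj_mem n₁ hn₁ n₂⁻¹)
  have ci : Subgroup.Commensurable K Q := commensurable_of_le hKQ ri
  have cii : Subgroup.Commensurable P Q := commensurable_of_le hPQ rii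
  have ciii : Subgroup.Commensurable D P := commensurable_of_le hDP riii
  have civ : Subgroup.Commensurable D N := commensurable_of_le hDN riv
  exact ⟨N, hNnormal, ci.trans ((cii.symm).trans ((ciii.symm).trans civ))⟩
end
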